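/- For every integer j ≥ 0 and every x ∈ C^{j,−1}, one has (ε∘d)^{j+2}(δx) = (−1)^{j+1} · d((ε∘d)^{j+1} x). Equivalently, the maps Φ_j := (ε∘d)^{j+1} : C^{j,−1} → C^{−1,j} intertwine the two differentials up to sign: Φ_{j+1} ∘ δ = (−1)^{j+1} d ∘ Φ_j. -/
import Mathlib


/-- The maps `Φ_j = (ε∘d)^{j+1}` intertwine the differentials up to sign:
on `C^{j,-1}`, `(εd)^{j+2} ∘ δ = (−1)^{j+1} d ∘ (εd)^{j+1}`. -/
theorem Phi_chain_map {R M : Type*} [CommRing R] [AddCommGroup M] [Module R M]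
    (C : ℤ → ℤ → Submodule R M)
    (hCzero : ∀ j k : ℤ, (j ≤ -2 ∨ k ≤ -2) → C j k = ⊥)
    (d δ' ε : Module.End R M)
    (hd_map : ∀ j k : ℤ, ∀ x ∈ C j k, d x ∈ C j (k + 1))
    (hδ_map : ∀ j k : ℤ, ∀ x ∈ C j k, δ' x ∈ C (j + 1) k)
    (hε_map : ∀ j k : ℤ, ∀ x ∈ C j k, ε x ∈ C (j - 1) k)
    (hdd : ∀ j k : ℤ, ∀ x ∈ C j k, d (d x) = 0)
    (hδδ : ∀ j k : ℤ, ∀ x ∈ C j k, δ' (δ' x) = 0)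
    (hdδ : ∀ j k : ℤ, ∀ x ∈ C j k, d (δ' x) = δ' (d x))
    (hεδ : ∀ j k : ℤ, ∀ x ∈ C j k, ε (δ' x) + δ' (ε x) = x)
    (j : ℕ) (x : M) (hx : x ∈ C (j : ℤ) (-1)) :
    ((ε * d) ^ (j + 2)) (δ' x) = ((-1 : ℤ) ^ (j + 1)) • d (((ε * d) ^ (j + 1)) x) := by
  set T : Module.End R M := ε * d with hTdef
  -- one-step identity
  have step : ∀ p q : ℤ, ∀ y ∈ C p q, T (δ' y) = d y - δ' (T y) := by
    intro p q y hy
    have h1 : d (δ' y) = δ' (d y) := hdδ p q y hy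
    have h2 : ε (δ' (d y)) + δ' (ε (d y)) = d y :=
      hεδ p (q + 1) (d y) (hd_map p q y hy)
    have : T (δ' y) = ε (d (δ' y)) := rfl
    rw [this, h1]
    have : T y = ε (d y) := rfl
    rw [this]
    exact eq_sub_of_add_eq h2
  -- T kills exact elements
  have Td : ∀ p q : ℤ, ∀ y ∈ C p q, T (d y) = 0 := by
    intro p q y hy
    have : T (d y) = ε (d (d y)) := rfl
    rw [this, hdd p q y hy, map_zero]
  -- membership of iterates
  have mem : ∀ m : ℕ, ∀ p q : ℤ, ∀ y ∈ C p q, (T ^ m) y ∈ C (p - m) (q + m) := by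
    intro m
    induction m with
    | zero => intro p q y hy; simpa using hy
    | succ m ih =>
      intro p q y hy
      have h1 : (T ^ (m + 1)) y = T ((T ^ m) y) := by
        rw [pow_succ']; rfl
      rw [h1]
      have h2 := hd_map _ _ _ (ih p q y hy)
      have h3 := hε_map _ _ _ h2
      have e1 : (p - (m:ℤ)) - 1 = p - ((m:ℕ) + 1 : ℕ) := by push_cast; ring
      have e2 : (q + (m:ℤ)) + 1 = q + ((m:ℕ) + 1 : ℕ) := by push_cast; ring
      rw [e1, e2] at h3
      exact h3
  -- main inductive lemma
  have L : ∀ n : ℕ, ∀ p q : ℤ, ∀ y ∈ C p q,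
      (T ^ (n + 2)) (δ' y)
        = ((-1 : ℤ) ^ (n + 1)) • (d ((T ^ (n + 1)) y) - δ' ((T ^ (n + 2)) y)) := by
    intro n
    induction n with
    | zero =>
      intro p q y hy
      have hTy : T y ∈ C (p - 1) (q + 1) := hε_map _ _ _ (hd_map p q y hy)
      have h1 : (T ^ 2) (δ' y) = T (T (δ' y)) := by
        rw [show (2 : ℕ) = 1 + 1 from rfl, pow_succ, pow_one]; rfl
      rw [h1, step p q y hy, map_sub, Td p q y hy, zero_sub,
        step (p - 1) (q + 1) (T y) hTy]
      have h2 : T (T y) = (T ^ 2) y := by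
        rw [show (2 : ℕ) = 1 + 1 from rfl, pow_succ, pow_one]; rfl
      rw [h2, zero_add, pow_one, neg_one_zsmul, pow_one]
    | succ n ih =>
      intro p q y hy
      have hTy : T y ∈ C (p - 1) (q + 1) := hε_map _ _ _ (hd_map p q y hy)
      have h1 : (T ^ (n + 3)) (δ' y) = (T ^ (n + 2)) (T (δ' y)) := by
        rw [show n + 3 = (n + 2) + 1 from rfl, pow_succ]; rfl
      rw [h1, step p q y hy, map_sub]
      have h2 : (T ^ (n + 2)) (d y) = 0 := by
        rw [show n + 2 = (n + 1) + 1 from rfl, pow_succ]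
        show (T ^ (n + 1)) (T (d y)) = 0
        rw [Td p q y hy, map_zero]
      rw [h2, zero_sub, ih (p - 1) (q + 1) (T y) hTy]
      have h3 : (T ^ (n + 1)) (T y) = (T ^ (n + 2)) y := by
        rw [show n + 2 = (n + 1) + 1 from rfl, pow_succ]; rfl
      have h4 : (T ^ (n + 2)) (T y) = (T ^ (n + 3)) y := by
        rw [show n + 3 = (n + 2) + 1 from rfl, pow_succ]; rfl
      rw [h3, h4, ← neg_smul]
      congr 1
      ring
  -- vanishing of the top iterate
  have hvanish : (T ^ (j + 2)) x = 0 := by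
    have h := mem (j + 2) (j : ℤ) (-1) x hx
    have e : ((j : ℤ) - ((j + 2 : ℕ) : ℤ)) = -2 := by push_cast; ring
    rw [e, hCzero (-2) _ (Or.inl le_rfl)] at h
    simpa using h
  have := L j (j : ℤ) (-1) x hx
  rw [this, hvanish, map_zero, sub_zero]
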